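/- Let X be a nonempty Polish space (separable and completely metrizable) and let (A_i)_{i∈I} be a family of meager subsets of X with |I| < cov K. Then ⋃_{i∈I} A_i ≠ X; that is, a nonempty Polish space cannot be covered by fewer than cov K many meager sets. -/

import Mathlib

open Metric Topology Set Filter

noncomputable section

namespace CovKAux

lemma isNowhereDense_of_forall {α : Type*} [TopologicalSpace α] (S : Set α)
    (h : ∀ J : Set α, IsOpen J → J.Nonempty →
      ∃ J', IsOpen J' ∧ J'.Nonempty ∧ J' ⊆ J ∧ J' ∩ S = ∅) :
    IsNowhereDense S := by
  rw [IsNowhereDense]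
  by_contra hne
  obtain ⟨J', hJ'o, hJ'ne, hsub, hdisj⟩ := h _ isOpen_interior (nonempty_iff_ne_empty.2 hne)
  obtain ⟨x, hx⟩ := hJ'ne
  have hxc : x ∈ closure S := interior_subset (hsub hx)
  rcases mem_closure_iff.1 hxc J' hJ'o hx with ⟨y, hyJ, hyS⟩
  have : y ∈ J' ∩ S := ⟨hyJ, hyS⟩
  rw [hdisj] at this
  exact this

/-! ### Interval pieces -/

def piece (a b : ℝ) (n : ℕ) : ℝ × ℝ := (a + (b - a) / (n + 2), a + (b - a) / (n + 1))

variable {a b : ℝ} {n m : ℕ}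

lemma piece_lt (h : a < b) : (piece a b n).1 < (piece a b n).2 := by
  have hba : (0:ℝ) < b - a := by linarith
  have h1 : (0:ℝ) < (n:ℝ) + 1 := by positivity
  have h2 : (0:ℝ) < (n:ℝ) + 2 := by positivity
  have : (b - a) / (n + 2) < (b - a) / (n + 1) := by
    apply div_lt_div_of_pos_left hba h1; linarith
  simpa [piece] using this

lemma piece_subset (h : a < b) :
    Ioo (piece a b n).1 (piece a b n).2 ⊆ Ioo a b := by
  have hba : (0:ℝ) < b - a := by linarith
  apply Ioo_subset_Ioo
  · have : (0:ℝ) ≤ (b - a) / ((n:ℝ) + 2) := by positivity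
    simp only [piece]; linarith
  · simp only [piece]
    have : (b - a) / (n + 1) ≤ b - a := by
      apply div_le_self (le_of_lt hba)
      have : (0:ℝ) ≤ (n:ℝ) := Nat.cast_nonneg n
      linarith
    linarith

lemma piece_len (h : a < b) :
    (piece a b n).2 - (piece a b n).1 ≤ (b - a) / 2 := by
  have hba : (0:ℝ) < b - a := by linarith
  have h1 : (0:ℝ) < (n:ℝ) + 1 := by positivity
  have h2 : (0:ℝ) < (n:ℝ) + 2 := by positivity
  have key : (b - a) / (n + 1) - (b - a) / (n + 2) = (b - a) / (((n:ℝ) + 1) * ((n:ℝ) + 2)) := by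
    field_simp; ring
  have h3 : (2:ℝ) ≤ ((n:ℝ) + 1) * ((n:ℝ) + 2) := by nlinarith [Nat.cast_nonneg (α := ℝ) n]
  have : (b - a) / (((n:ℝ) + 1) * ((n:ℝ) + 2)) ≤ (b - a) / 2 := by
    apply div_le_div_of_nonneg_left (le_of_lt hba) (by norm_num) h3
  simp only [piece]
  linarith

lemma piece_inj (h : a < b) {x : ℝ} (hm : x ∈ Ioo (piece a b m).1 (piece a b m).2)
    (hn : x ∈ Ioo (piece a b n).1 (piece a b n).2) : m = n := by
  have hba : (0:ℝ) < b - a := by linarith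
  by_contra hne
  -- wlog m < n
  have key : ∀ p q : ℕ, p < q → x ∈ Ioo (piece a b p).1 (piece a b p).2 →
      x ∈ Ioo (piece a b q).1 (piece a b q).2 → False := by
    intro p q hpq h1 h2
    have hle : (b - a) / (q + 1) ≤ (b - a) / (p + 2) := by
      apply div_le_div_of_nonneg_left (le_of_lt hba) (by positivity)
      have : (p:ℝ) + 1 ≤ q := by exact_mod_cast hpq
      linarith
    simp only [piece, mem_Ioo] at h1 h2
    linarith
  rcases lt_or_gt_of_ne hne with h' | h'
  · exact key m n h' hm hn
  · exact key n m h' hn hm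

def excset (a b : ℝ) : Set ℝ := Set.range (fun n : ℕ => a + (b - a) / (n + 1))

lemma excset_countable : (excset a b).Countable := countable_range _

lemma piece_cover (h : a < b) {x : ℝ} (hx : x ∈ Ioo a b) (hexc : x ∉ excset a b) :
    ∃ n, x ∈ Ioo (piece a b n).1 (piece a b n).2 := by
  have hba : (0:ℝ) < b - a := by linarith
  obtain ⟨hax, hxb⟩ := hx
  have ht : (0:ℝ) < x - a := by linarith
  have hex : ∃ k : ℕ, (b - a) / (k + 2) ≤ x - a := by
    obtain ⟨k, hk⟩ := exists_nat_ge ((b - a) / (x - a))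
    refine ⟨k, ?_⟩
    rw [div_le_iff₀ (by positivity)]
    rw [div_le_iff₀ ht] at hk
    nlinarith
  let n := Nat.find hex
  have h1 : (b - a) / (n + 2) ≤ x - a := Nat.find_spec hex
  have h2 : x - a < (b - a) / (n + 1) := by
    rcases Nat.eq_zero_or_pos n with h0 | hpos
    · rw [h0]; norm_num; linarith
    · have hmin := Nat.find_min hex (show n - 1 < n by omega)
      push_neg at hmin
      have hcast : ((n - 1 : ℕ) : ℝ) + 2 = (n : ℝ) + 1 := by
        rw [Nat.cast_sub hpos]; push_cast; ring
      rwa [hcast] at hmin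
  have h1' : (b - a) / (n + 2) < x - a := by
    rcases lt_or_eq_of_le h1 with h' | h'
    · exact h'
    · exfalso
      apply hexc
      refine ⟨n + 1, ?_⟩
      push_cast
      have hc : ((n:ℝ) + 1 + 1) = (n:ℝ) + 2 := by ring
      rw [hc]
      linarith
  exact ⟨n, by constructor <;> (simp only [piece]; linarith)⟩

/-! ### The ball scheme in a complete separable metric space -/

section Scheme

variable (X : Type*) [MetricSpace X] [CompleteSpace X]
  [TopologicalSpace.SeparableSpace X] [Nonempty X]

open Classical in
/-- child ball of the ball `ball c r`, with index `n` encoding a pair. -/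
def bchild (c : X) (r : ℝ) (n : ℕ) : X × ℝ :=
  if Metric.closedBall (TopologicalSpace.denseSeq X n.unpair.1)
      (min (1 / ((n.unpair.2 : ℝ) + 1)) (r / 2)) ⊆ Metric.ball c r
  then (TopologicalSpace.denseSeq X n.unpair.1, min (1 / ((n.unpair.2 : ℝ) + 1)) (r / 2))
  else (c, r / 2)

variable {X}

lemma bchild_rpos {c : X} {r : ℝ} (hr : 0 < r) (n : ℕ) : 0 < (bchild X c r n).2 := by
  rw [bchild]
  split
  · exact lt_min (by positivity) (by linarith)
  · simp; linarith

lemma bchild_rle {c : X} {r : ℝ} (n : ℕ) : (bchild X c r n).2 ≤ r / 2 := by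
  rw [bchild]; split
  · exact min_le_right _ _
  · simp

lemma bchild_sub {c : X} {r : ℝ} (hr : 0 < r) (n : ℕ) :
    Metric.closedBall (bchild X c r n).1 (bchild X c r n).2 ⊆ Metric.ball c r := by
  rw [bchild]
  split
  · assumption
  · exact Metric.closedBall_subset_ball (by linarith)

lemma bchild_exists {c : X} {r : ℝ} (hr : 0 < r) {V : Set X} (hV : IsOpen V)
    (hne : V.Nonempty) (hsub : V ⊆ Metric.ball c r) :
    ∃ n, Metric.closedBall (bchild X c r n).1 (bchild X c r n).2 ⊆ V := by
  obtain ⟨y, hy⟩ := hne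
  obtain ⟨ε, hε, hball⟩ := Metric.isOpen_iff.1 hV y hy
  obtain ⟨j, hj⟩ : ∃ j : ℕ, 1 / ((j : ℝ) + 1) < ε / 2 := exists_nat_one_div_lt (by linarith)
  obtain ⟨k, hk⟩ := (TopologicalSpace.denseRange_denseSeq X).exists_dist_lt y
    (show (0:ℝ) < ε / 2 by linarith)
  refine ⟨Nat.pair k j, ?_⟩
  rw [bchild, Nat.unpair_pair]
  set xk := TopologicalSpace.denseSeq X k with hxk
  set ρ := min (1 / ((j : ℝ) + 1)) (r / 2) with hρ
  have key : Metric.closedBall xk ρ ⊆ V := by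
    intro w hw
    apply hball
    rw [Metric.mem_ball]
    have h1 : dist w xk ≤ ρ := hw
    have h2 : ρ ≤ 1 / ((j : ℝ) + 1) := min_le_left _ _
    calc dist w y ≤ dist w xk + dist xk y := dist_triangle _ _ _
      _ < ε / 2 + ε / 2 := by
          rw [dist_comm xk y]
          have := hk
          linarith
      _ = ε := by ring
  have cond : Metric.closedBall xk ρ ⊆ Metric.ball c r := key.trans hsub
  rw [if_pos cond]
  exact key

variable (X)

/-- The scheme: each node (a list of child indices, most recent first) carries an
interval of `ℝ` and a ball of `X`. -/
def node (z : ℝ) : List ℕ → (ℝ × ℝ) × (X × ℝ)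
  | [] => ((z, z + 1), (Classical.arbitrary X, 1))
  | n :: s => (piece (node z s).1.1 (node z s).1.2 n,
      bchild X (node z s).2.1 (node z s).2.2 n)

/-- the interval of a node -/
def nodeI (z : ℝ) (s : List ℕ) : Set ℝ := Ioo (node X z s).1.1 (node X z s).1.2

variable {X}
variable {z x : ℝ}

lemma node_lt (s : List ℕ) : (node X z s).1.1 < (node X z s).1.2 := by
  induction s with
  | nil => simp [node]
  | cons n s ih => exact piece_lt ih

lemma node_rpos (s : List ℕ) : 0 < (node X z s).2.2 := by
  induction s with
  | nil => simp [node]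
  | cons n s ih => exact bchild_rpos ih n

lemma node_len (s : List ℕ) :
    (node X z s).1.2 - (node X z s).1.1 ≤ 1 / 2 ^ s.length := by
  induction s with
  | nil => simp [node]
  | cons n s ih =>
    have h1 := piece_len (n := n) (node_lt (X := X) (z := z) s)
    have h2 : ((node X z s).1.2 - (node X z s).1.1) / 2 ≤ 1 / 2 ^ s.length / 2 := by
      linarith
    calc (node X z (n :: s)).1.2 - (node X z (n :: s)).1.1
        ≤ ((node X z s).1.2 - (node X z s).1.1) / 2 := h1
      _ ≤ 1 / 2 ^ s.length / 2 := h2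
      _ = 1 / 2 ^ (n :: s).length := by
          rw [List.length_cons]
          rw [pow_succ]
          ring

lemma node_rle (s : List ℕ) : (node X z s).2.2 ≤ 1 / 2 ^ s.length := by
  induction s with
  | nil => simp [node]
  | cons n s ih =>
    calc (node X z (n :: s)).2.2 ≤ (node X z s).2.2 / 2 := bchild_rle n
      _ ≤ 1 / 2 ^ s.length / 2 := by linarith
      _ = 1 / 2 ^ (n :: s).length := by rw [List.length_cons, pow_succ]; ring

lemma nodeI_cons_subset (n : ℕ) (s : List ℕ) : nodeI X z (n :: s) ⊆ nodeI X z s :=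
  piece_subset (node_lt s)

lemma node_cb_sub (n : ℕ) (s : List ℕ) :
    Metric.closedBall (node X z (n :: s)).2.1 (node X z (n :: s)).2.2 ⊆
      Metric.ball (node X z s).2.1 (node X z s).2.2 :=
  bchild_sub (node_rpos s) n

lemma node_ball_sub (n : ℕ) (s : List ℕ) :
    Metric.ball (node X z (n :: s)).2.1 (node X z (n :: s)).2.2 ⊆
      Metric.ball (node X z s).2.1 (node X z s).2.2 :=
  (Metric.ball_subset_closedBall).trans (node_cb_sub n s)

variable (X) in
/-- next child index on the canonical branch through `x` -/
def nxt (z x : ℝ) (s : List ℕ) : ℕ :=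
  letI := Classical.propDecidable (∃ n, x ∈ nodeI X z (n :: s))
  if h : ∃ n, x ∈ nodeI X z (n :: s) then h.choose else 0

variable (X) in
/-- the canonical branch through `x` -/
def br (z x : ℝ) : ℕ → List ℕ
  | 0 => []
  | k + 1 => nxt X z x (br z x k) :: br z x k

lemma br_length (k : ℕ) : (br X z x k).length = k := by
  induction k with
  | zero => rfl
  | succ k ih => simp [br, ih]

variable (X) in
/-- centers along the canonical branch -/
def cseq (z x : ℝ) (k : ℕ) : X := (node X z (br X z x k)).2.1

lemma cseq_cauchy : CauchySeq (cseq X z x) := by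
  apply cauchySeq_of_le_geometric (1/2) 1 (by norm_num)
  intro k
  have h1 : cseq X z x (k + 1) ∈
      Metric.ball (node X z (br X z x k)).2.1 (node X z (br X z x k)).2.2 := by
    have : cseq X z x (k + 1) ∈ Metric.closedBall (node X z (br X z x (k+1))).2.1
        (node X z (br X z x (k+1))).2.2 :=
      Metric.mem_closedBall_self (le_of_lt (node_rpos _))
    exact node_cb_sub _ _ this
  rw [Metric.mem_ball] at h1
  have h2 := node_rle (X := X) (z := z) (br X z x k)
  rw [br_length] at h2
  rw [dist_comm]
  calc dist (cseq X z x (k+1)) (cseq X z x k) ≤ 1 / 2 ^ k := le_of_lt (lt_of_lt_of_le h1 h2)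
    _ = 1 * (1/2) ^ k := by rw [one_mul, one_div, one_div, inv_pow]

variable (X) in
/-- The scheme map: limit of the centers along the canonical branch of `x`. -/
def FF (z x : ℝ) : X := limUnder atTop (cseq X z x)

lemma FF_tendsto : Tendsto (cseq X z x) atTop (𝓝 (FF X z x)) :=
  cseq_cauchy.tendsto_limUnder

lemma ball_br_mono {k m : ℕ} (h : k ≤ m) :
    Metric.ball (node X z (br X z x m)).2.1 (node X z (br X z x m)).2.2 ⊆
      Metric.ball (node X z (br X z x k)).2.1 (node X z (br X z x k)).2.2 := by
  induction m, h using Nat.le_induction with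
  | base => exact subset_rfl
  | succ m hm ih => exact (node_ball_sub _ _).trans ih

lemma FF_mem_closure (k : ℕ) :
    FF X z x ∈ closure (Metric.ball (node X z (br X z x k)).2.1 (node X z (br X z x k)).2.2) := by
  apply mem_closure_of_tendsto FF_tendsto
  rw [eventually_atTop]
  exact ⟨k, fun m hm => ball_br_mono hm (Metric.mem_ball_self (node_rpos _))⟩

lemma nodeI_cons_inj {m n : ℕ} {s : List ℕ} (hm : x ∈ nodeI X z (m :: s))
    (hn : x ∈ nodeI X z (n :: s)) : m = n :=
  piece_inj (node_lt s) hm hn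

lemma br_eq (t : List ℕ) (hx : x ∈ nodeI X z t) : br X z x t.length = t := by
  induction t with
  | nil => rfl
  | cons n s ih =>
    have hx' : x ∈ nodeI X z s := nodeI_cons_subset n s hx
    have ihs := ih hx'
    show nxt X z x (br X z x s.length) :: br X z x s.length = n :: s
    rw [ihs]
    have hex : ∃ m, x ∈ nodeI X z (m :: s) := ⟨n, hx⟩
    have : nxt X z x s = hex.choose := dif_pos hex
    rw [this]
    rw [nodeI_cons_inj hex.choose_spec hx]

variable (X) in
/-- exceptional countable set: the subdivision points of all nodes -/
def exc (z : ℝ) : Set ℝ := ⋃ s : List ℕ, excset (node X z s).1.1 (node X z s).1.2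

lemma exc_countable : (exc X z).Countable :=
  countable_iUnion fun _ => excset_countable

lemma full_branch (hx : x ∈ Ioo z (z + 1)) (he : x ∉ exc X z) (k : ℕ) :
    x ∈ nodeI X z (br X z x k) := by
  induction k with
  | zero => exact hx
  | succ k ih =>
    have hne : x ∉ excset (node X z (br X z x k)).1.1 (node X z (br X z x k)).1.2 := by
      intro hmem
      exact he (mem_iUnion.2 ⟨br X z x k, hmem⟩)
    obtain ⟨n, hn⟩ := piece_cover (node_lt _) ih hne
    have hex : ∃ m, x ∈ nodeI X z (m :: br X z x k) := ⟨n, hn⟩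
    show x ∈ nodeI X z (nxt X z x (br X z x k) :: br X z x k)
    rw [show nxt X z x (br X z x k) = hex.choose from dif_pos hex]
    exact hex.choose_spec

/-- Main lemma: the preimage under `FF X z` of a nowhere dense set, intersected with
`Ioo z (z+1)`, is nowhere dense in `ℝ`. -/
lemma main_nwd {B : Set X} (hB : IsNowhereDense B) (z : ℝ) :
    IsNowhereDense (FF X z ⁻¹' closure B ∩ Ioo z (z + 1)) := by
  apply isNowhereDense_of_forall
  intro J hJ hJne
  by_cases hint : (J ∩ Ioo z (z + 1)).Nonempty
  · set J₀ := J ∩ Ioo z (z + 1) with hJ₀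
    have hJ₀o : IsOpen J₀ := hJ.inter isOpen_Ioo
    have hxne : (J₀ ∩ (exc X z)ᶜ).Nonempty := by
      have hd : Dense (exc X z)ᶜ := Set.Countable.dense_compl ℝ exc_countable
      exact hd.inter_open_nonempty J₀ hJ₀o hint
    obtain ⟨x, hxJ₀, hxexc⟩ := hxne
    obtain ⟨ε, hεpos, hball⟩ := Metric.isOpen_iff.1 hJ₀o x hxJ₀
    obtain ⟨k, hk⟩ := exists_pow_lt_of_lt_one hεpos (show (1:ℝ)/2 < 1 by norm_num)
    have hfb := full_branch hxJ₀.2 hxexc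
    set s := br X z x k with hs
    have hxs : x ∈ nodeI X z s := hfb k
    have hsubJ : nodeI X z s ⊆ J₀ := by
      intro y hy
      apply hball
      rw [Metric.mem_ball, Real.dist_eq]
      have hlen := node_len (X := X) (z := z) s
      rw [hs, br_length] at hlen
      rw [hs] at hy hxs
      rw [abs_lt]
      have h12 : (1:ℝ)/2^k = (1/2)^k := by rw [one_div, one_div, inv_pow]
      constructor <;> (simp only [nodeI, mem_Ioo] at hy hxs; rw [← hs] at *; nlinarith)
    -- choose a child ball avoiding `closure B`
    have hrpos := node_rpos (X := X) (z := z) s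
    set c := (node X z s).2.1 with hc
    set r := (node X z s).2.2 with hr
    set V := Metric.ball c r \ closure B with hV
    have hVo : IsOpen V := Metric.isOpen_ball.sdiff isClosed_closure
    have hVne : V.Nonempty := by
      rw [Set.nonempty_iff_ne_empty]
      intro hemp
      have hsub : Metric.ball c r ⊆ closure B := by
        intro w hw
        by_contra hwB
        have : w ∈ V := ⟨hw, hwB⟩
        rw [hemp] at this
        exact this
      have : Metric.ball c r ⊆ interior (closure B) :=
        Metric.isOpen_ball.subset_interior_iff.2 hsub
      rw [hB] at this
      exact absurd (this (Metric.mem_ball_self hrpos)) (notMem_empty _)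
    obtain ⟨n, hn⟩ := bchild_exists hrpos hVo hVne diff_subset
    refine ⟨nodeI X z (n :: s), isOpen_Ioo, nonempty_Ioo.2 (node_lt _), ?_, ?_⟩
    · exact (nodeI_cons_subset n s).trans (hsubJ.trans Set.inter_subset_left)
    · rw [Set.eq_empty_iff_forall_notMem]
      rintro y ⟨hyJ', hyB, _⟩
      have hbr : br X z y (n :: s).length = n :: s := br_eq _ hyJ'
      have hmem := FF_mem_closure (X := X) (z := z) (x := y) (n :: s).length
      rw [hbr] at hmem
      have : FF X z y ∈ V := by
        apply hn
        have heq : (node X z (n :: s)).2 = bchild X c r n := rfl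
        have hcb : closure (Metric.ball (node X z (n :: s)).2.1 (node X z (n :: s)).2.2) ⊆
            Metric.closedBall (bchild X c r n).1 (bchild X c r n).2 := by
          rw [heq]
          exact Metric.closure_ball_subset_closedBall
        exact hcb hmem
      exact this.2 hyB
  · refine ⟨J, hJ, hJne, subset_rfl, ?_⟩
    rw [Set.not_nonempty_iff_eq_empty] at hint
    rw [Set.eq_empty_iff_forall_notMem]
    rintro y ⟨hyJ, _, hyI⟩
    have : y ∈ J ∩ Ioo z (z + 1) := ⟨hyJ, hyI⟩
    rw [hint] at this
    exact this

end Scheme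

end CovKAux

/-- `cov K`: the least cardinality of a family of nowhere dense subsets of `ℝ`
whose union is all of `ℝ`. -/
noncomputable def covK : Cardinal :=
  sInf {c : Cardinal | ∃ (ι : Type) (A : ι → Set ℝ),
    (∀ i, IsNowhereDense (A i)) ∧ (⋃ i, A i) = Set.univ ∧ c = Cardinal.mk ι}

namespace CovKAux

lemma covK_set_nonempty :
    {c : Cardinal | ∃ (ι : Type) (A : ι → Set ℝ),
      (∀ i, IsNowhereDense (A i)) ∧ (⋃ i, A i) = Set.univ ∧ c = Cardinal.mk ι}.Nonempty := by
  refine ⟨Cardinal.mk ℝ, ℝ, fun x => {x}, fun x => ?_, ?_, rfl⟩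
  · rw [IsNowhereDense, closure_singleton, interior_singleton]
  · exact Set.iUnion_of_singleton ℝ

lemma aleph0_lt_covK : Cardinal.aleph0 < covK := by
  have hmem := csInf_mem covK_set_nonempty
  obtain ⟨ι₀, A₀, hnwd, hcov, hc⟩ := hmem
  rw [lt_iff_not_ge]
  intro hle
  have hcount : Countable ι₀ := by
    rw [← Cardinal.mk_le_aleph0_iff, ← hc]
    exact hle
  have hmeagre : IsMeagre (Set.univ : Set ℝ) := by
    rw [isMeagre_iff_countable_union_isNowhereDense]
    refine ⟨Set.range A₀, ?_, Set.countable_range _, ?_⟩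
    · rintro t ⟨i, rfl⟩; exact hnwd i
    · rw [Set.sUnion_range, hcov]
  rw [IsMeagre, Set.compl_univ] at hmeagre
  have hdense : Dense (∅ : Set ℝ) := dense_of_mem_residual hmeagre
  exact Set.not_nonempty_empty hdense.nonempty

end CovKAux

open CovKAux in
/-- A nonempty Polish space cannot be covered by fewer than `cov K` many meager sets. -/
theorem polish_not_covered_by_lt_covK_meager {X : Type*} [TopologicalSpace X]
    [PolishSpace X] [Nonempty X] (ι : Type) (A : ι → Set X)
    (hcard : Cardinal.mk ι < covK) (hA : ∀ i, IsMeagre (A i)) :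
    (⋃ i, A i) ≠ Set.univ := by
  intro hcontra
  letI := TopologicalSpace.upgradeIsCompletelyMetrizable X
  -- decompose each meager set into countably many nowhere dense sets
  have hdecomp : ∀ i : ι, ∃ f : ℕ → Set X,
      (∀ n, IsNowhereDense (f n)) ∧ A i ⊆ ⋃ n, f n := by
    intro i
    obtain ⟨S, hSnwd, hScount, hSsub⟩ :=
      isMeagre_iff_countable_union_isNowhereDense.1 (hA i)
    obtain ⟨f, hf⟩ := (hScount.insert ∅).exists_eq_range (Set.insert_nonempty _ _)
    refine ⟨f, fun n => ?_, ?_⟩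
    · have : f n ∈ insert ∅ S := hf ▸ Set.mem_range_self n
      rcases this with h | h
      · rw [h]; exact isNowhereDense_empty
      · exact hSnwd _ h
    · refine hSsub.trans ?_
      intro y hy
      obtain ⟨t, htS, hyt⟩ := hy
      have : t ∈ insert ∅ S := Set.mem_insert_of_mem _ htS
      rw [hf] at this
      obtain ⟨n, rfl⟩ := this
      exact Set.mem_iUnion.2 ⟨n, hyt⟩
  choose f hfnwd hfsub using hdecomp
  -- build a covering of ℝ by nowhere dense sets
  set T := (ℤ × (ι × ℕ)) ⊕ ℤ with hT
  set C : T → Set ℝ := fun t =>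
    match t with
    | Sum.inl (z, i, n) =>
        FF X (z : ℝ) ⁻¹' closure (f i n) ∩ Set.Ioo (z : ℝ) ((z : ℝ) + 1)
    | Sum.inr z => {(z : ℝ)} with hC
  have hnwdC : ∀ t, IsNowhereDense (C t) := by
    rintro (⟨z, i, n⟩ | z)
    · exact main_nwd (hfnwd i n) (z : ℝ)
    · rw [IsNowhereDense, closure_singleton, interior_singleton]
  have hcovC : (⋃ t, C t) = Set.univ := by
    rw [Set.eq_univ_iff_forall]
    intro x
    rw [Set.mem_iUnion]
    by_cases hx : ∃ z : ℤ, (z : ℝ) = x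
    · obtain ⟨z, hz⟩ := hx
      exact ⟨Sum.inr z, by simp [hC, hz]⟩
    · push_neg at hx
      set z := ⌊x⌋ with hz
      have h1 : (z : ℝ) < x := lt_of_le_of_ne (Int.floor_le x) (hx z)
      have h2 : x < (z : ℝ) + 1 := Int.lt_floor_add_one x
      have hmem : FF X (z : ℝ) x ∈ Set.univ := Set.mem_univ _
      rw [← hcontra] at hmem
      obtain ⟨i, hi⟩ := Set.mem_iUnion.1 hmem
      have := hfsub i hi
      obtain ⟨n, hn⟩ := Set.mem_iUnion.1 this
      exact ⟨Sum.inl (z, i, n), ⟨subset_closure hn, h1, h2⟩⟩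
  have hle : covK ≤ Cardinal.mk T :=
    csInf_le' ⟨T, C, hnwdC, hcovC, rfl⟩
  have hlt : Cardinal.mk T < covK := by
    have ha := aleph0_lt_covK
    have hTeq : Cardinal.mk T = Cardinal.mk ℤ * (Cardinal.mk ι * Cardinal.mk ℕ)
        + Cardinal.mk ℤ := by
      simp [hT, Cardinal.mk_sum, Cardinal.mk_prod, Cardinal.lift_id]
    rw [hTeq, Cardinal.mk_int, Cardinal.mk_nat]
    exact Cardinal.add_lt_of_lt ha.le
      (Cardinal.mul_lt_of_lt ha.le ha (Cardinal.mul_lt_of_lt ha.le hcard ha)) ha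
  exact absurd hle (not_le.2 hlt)
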